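/- Let π₁,...,π_d be independent uniformly random permutations of {1,...,n} and A, B ⊆ {1,...,n}. Define e(A,B) = ∑_{i=1}^d |{x ∈ A : π_i(x) ∈ B}| and μ = |A||B|d/n. Then for any real k ≥ e, P[e(A,B) ≥ kμ] ≤ exp(−k(log k − 2)μ). -/

import Mathlib

open Finset

lemma inj_count {α β : Type*} [Fintype α] [Fintype β] [DecidableEq α] [DecidableEq β]
    (C : Finset β) :
    (univ.filter fun g : α → β => Function.Injective g ∧ ∀ x, g x ∈ C).card
      = C.card.descFactorial (Fintype.card α) := by
  rw [← Fintype.card_subtype]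
  have e : {g : α → β // Function.Injective g ∧ ∀ x, g x ∈ C} ≃ (α ↪ ↥C) :=
    { toFun := fun g => ⟨fun x => ⟨g.1 x, g.2.2 x⟩, fun a b h => g.2.1 (Subtype.ext_iff.mp h)⟩
      invFun := fun f => ⟨fun x => (f x : β), fun a b h => f.injective (Subtype.ext h),
        fun x => (f x).2⟩
      left_inv := fun g => rfl
      right_inv := fun f => by ext x; rfl }
  rw [Fintype.card_congr e, Fintype.card_embedding_eq, Fintype.card_coe]

lemma perm_count_le (n : ℕ) (T B : Finset (Fin n)) :
    (univ.filter fun σ : Equiv.Perm (Fin n) => ∀ x ∈ T, σ x ∈ B).card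
      ≤ B.card.descFactorial T.card * Nat.factorial (n - T.card) := by
  classical
  set S := univ.filter fun σ : Equiv.Perm (Fin n) => ∀ x ∈ T, σ x ∈ B with hS
  set r : Equiv.Perm (Fin n) → (↥T → Fin n) := fun σ x => σ (x : Fin n) with hr
  have hfib : S.card = ∑ g ∈ S.image r, (S.filter fun σ => r σ = g).card :=
    card_eq_sum_card_fiberwise (fun σ hσ => mem_image_of_mem r hσ)
  have himg : (S.image r).card ≤ B.card.descFactorial T.card := by
    have hsub : S.image r ⊆ univ.filter
        (fun g : ↥T → Fin n => Function.Injective g ∧ ∀ x, g x ∈ B) := by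
      intro g hg
      obtain ⟨σ, hσ, rfl⟩ := mem_image.mp hg
      simp only [mem_filter, mem_univ, true_and, hS] at hσ ⊢
      exact ⟨fun a b h => Subtype.ext (σ.injective h), fun x => hσ x x.2⟩
    calc (S.image r).card ≤ _ := card_le_card hsub
      _ = B.card.descFactorial (Fintype.card ↥T) := inj_count B
      _ = B.card.descFactorial T.card := by rw [Fintype.card_coe]
  have hfibbd : ∀ g ∈ S.image r, (S.filter fun σ => r σ = g).card
      ≤ Nat.factorial (n - T.card) := by
    intro g hg
    obtain ⟨σ₀, hσ₀, rfl⟩ := mem_image.mp hg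
    set U : Finset (Fin n) := (univ : Finset ↥T).image (fun x : ↥T => σ₀ x.1) with hU
    have hUcard : U.card = T.card := by
      rw [hU, card_image_of_injective _ (fun a b h => Subtype.ext (σ₀.injective h)),
        card_univ, Fintype.card_coe]
    have key : (S.filter fun σ => r σ = r σ₀).card ≤
        (univ.filter (fun h : ↥(Tᶜ) → Fin n => Function.Injective h ∧ ∀ x, h x ∈ Uᶜ)).card := by
      apply card_le_card_of_injOn (fun σ => fun x : ↥(Tᶜ) => σ (x : Fin n))
      · intro σ hσ
        simp only [mem_coe, mem_filter, mem_univ, true_and, hS] at hσ ⊢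
        obtain ⟨hmapB, hre⟩ := hσ
        refine ⟨fun a b h => Subtype.ext (σ.injective h), fun x => ?_⟩
        rw [Finset.mem_compl]
        intro hmem
        rw [hU, mem_image] at hmem
        obtain ⟨y, _, hy⟩ := hmem
        have h1 : σ y.1 = σ₀ y.1 := congrFun hre y
        have h2 : σ y.1 = σ x.1 := by rw [h1, hy]
        have hxy : y.1 = x.1 := σ.injective h2
        have hx2 := x.2
        rw [Finset.mem_compl] at hx2
        exact hx2 (hxy ▸ y.2)
      · intro σ hσ σ' hσ' hEq
        simp only [mem_coe, mem_filter, mem_univ, true_and, hS] at hσ hσ'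
        refine Equiv.ext fun x => ?_
        by_cases hx : x ∈ T
        · have h1 : σ x = σ₀ x := congrFun hσ.2 ⟨x, hx⟩
          have h2 : σ' x = σ₀ x := congrFun hσ'.2 ⟨x, hx⟩
          rw [h1, h2]
        · have hx' : x ∈ Tᶜ := Finset.mem_compl.mpr hx
          have := congrFun hEq ⟨x, hx'⟩
          simpa using this
    calc (S.filter fun σ => r σ = r σ₀).card
        ≤ _ := key
      _ = (Uᶜ).card.descFactorial (Fintype.card ↥(Tᶜ)) := inj_count _
      _ = Nat.factorial (n - T.card) := by
          rw [Fintype.card_coe, Finset.card_compl, Finset.card_compl, Fintype.card_fin, hUcard,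
            Nat.descFactorial_self]
  calc S.card = _ := hfib
    _ ≤ ∑ _g ∈ S.image r, Nat.factorial (n - T.card) := sum_le_sum hfibbd
    _ = (S.image r).card * Nat.factorial (n - T.card) := by rw [sum_const, smul_eq_mul]
    _ ≤ B.card.descFactorial T.card * Nat.factorial (n - T.card) :=
        Nat.mul_le_mul_right _ himg

lemma nat_desc_ineq {b n : ℕ} (h : b ≤ n) : ∀ t : ℕ,
    b.descFactorial t * n ^ t ≤ b ^ t * n.descFactorial t
  | 0 => by simp
  | (t+1) => by
    rw [Nat.descFactorial_succ, Nat.descFactorial_succ, pow_succ, pow_succ]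
    have h1 : (b - t) * n ≤ b * (n - t) := by
      rw [Nat.sub_mul, Nat.mul_sub]
      exact Nat.sub_le_sub_left (by rw [mul_comm]; exact Nat.mul_le_mul_left t h) _
    calc (b - t) * b.descFactorial t * (n ^ t * n)
        = ((b - t) * n) * (b.descFactorial t * n ^ t) := by ring
      _ ≤ (b * (n - t)) * (b ^ t * n.descFactorial t) :=
          Nat.mul_le_mul h1 (nat_desc_ineq h t)
      _ = b ^ t * b * ((n - t) * n.descFactorial t) := by ring


lemma perm_count_real (n : ℕ) (hn : 1 ≤ n) (T B : Finset (Fin n)) :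
    ((univ.filter fun σ : Equiv.Perm (Fin n) => ∀ x ∈ T, σ x ∈ B).card : ℝ)
      ≤ ((B.card : ℝ) / n) ^ T.card * Nat.factorial n := by
  have hcount := perm_count_le n T B
  have hTn : T.card ≤ n := by
    simpa using card_le_card (subset_univ T)
  have hBn : B.card ≤ n := by simpa using card_le_card (subset_univ B)
  have hnat : (univ.filter fun σ : Equiv.Perm (Fin n) => ∀ x ∈ T, σ x ∈ B).card * n ^ T.card
      ≤ B.card ^ T.card * Nat.factorial n := by
    calc _ ≤ (B.card.descFactorial T.card * Nat.factorial (n - T.card)) * n ^ T.card :=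
          Nat.mul_le_mul_right _ hcount
      _ = (B.card.descFactorial T.card * n ^ T.card) * Nat.factorial (n - T.card) := by ring
      _ ≤ (B.card ^ T.card * n.descFactorial T.card) * Nat.factorial (n - T.card) :=
          Nat.mul_le_mul_right _ (nat_desc_ineq hBn T.card)
      _ = B.card ^ T.card * (Nat.factorial (n - T.card) * n.descFactorial T.card) := by ring
      _ = B.card ^ T.card * Nat.factorial n := by rw [Nat.factorial_mul_descFactorial hTn]
  have hn0 : (0:ℝ) < n := by exact_mod_cast hn
  rw [div_pow, div_mul_eq_mul_div, le_div_iff₀ (by positivity)]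
  calc ((univ.filter fun σ : Equiv.Perm (Fin n) => ∀ x ∈ T, σ x ∈ B).card : ℝ) * (n:ℝ) ^ T.card
      = ((((univ.filter fun σ : Equiv.Perm (Fin n) => ∀ x ∈ T, σ x ∈ B).card * n ^ T.card : ℕ)) : ℝ) := by
        push_cast; ring
    _ ≤ ((B.card ^ T.card * Nat.factorial n : ℕ) : ℝ) := by exact_mod_cast hnat
    _ = (B.card:ℝ) ^ T.card * Nat.factorial n := by push_cast; ring


lemma filter_pi_card {ι : Type*} [Fintype ι] [DecidableEq ι] {γ : ι → Type*}
    [∀ i, Fintype (γ i)] [∀ i, DecidableEq (γ i)] (p : ∀ i, γ i → Prop)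
    [∀ i, DecidablePred (p i)] :
    (univ.filter fun f : ∀ i, γ i => ∀ i, p i (f i)).card
      = ∏ i, (univ.filter fun x => p i x).card := by
  rw [← Fintype.card_subtype, Fintype.card_congr (Equiv.subtypePiEquivPi), Fintype.card_pi]
  simp [Fintype.card_subtype]

lemma tail_bound (μ : ℝ) (hμ : 0 ≤ μ) (k : ℝ) (hk : Real.exp 1 ≤ k)
    (N : ℕ) (q : ℝ) (hq : 0 ≤ q) (hNq : (N:ℝ) * q ≤ μ) :
    (N.choose ⌈k*μ⌉₊ : ℝ) * q ^ ⌈k*μ⌉₊ ≤ Real.exp (-(k * (Real.log k - 2) * μ)) := by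
  have hk0 : (0:ℝ) < k := lt_of_lt_of_le (Real.exp_pos 1) hk
  have hkμ : 0 ≤ k * μ := mul_nonneg hk0.le hμ
  set m := ⌈k*μ⌉₊ with hm
  by_cases hm0 : m = 0
  · -- then k*μ = 0 so μ = 0
    have : k * μ ≤ 0 := Nat.ceil_eq_zero.mp hm0
    have hμ0 : μ = 0 := by
      have := le_antisymm this hkμ
      rcases mul_eq_zero.mp this with h | h
      · exact absurd h hk0.ne'
      · exact h
    rw [hm0, hμ0]
    simp
  · have hm1 : 1 ≤ m := Nat.one_le_iff_ne_zero.mpr hm0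
    have hmpos : (0:ℝ) < m := by exact_mod_cast hm1
    have hkμm : k * μ ≤ m := Nat.le_ceil _
    -- step 1: choose N m * q^m ≤ (N*q)^m / m! ≤ μ^m/m!
    have h1 : (N.choose m : ℝ) * q ^ m ≤ μ ^ m / m.factorial := by
      calc (N.choose m : ℝ) * q ^ m ≤ ((N:ℝ) ^ m / m.factorial) * q ^ m := by
            apply mul_le_mul_of_nonneg_right _ (by positivity)
            exact_mod_cast Nat.choose_le_pow_div m N
        _ = ((N:ℝ) * q) ^ m / m.factorial := by rw [mul_pow]; ring
        _ ≤ μ ^ m / m.factorial := by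
            apply div_le_div_of_nonneg_right _ (by positivity)
            exact pow_le_pow_left₀ (by positivity) hNq m
    -- step 2: μ^m/m! ≤ (e μ / m)^m
    have h2 : μ ^ m / m.factorial ≤ (Real.exp 1 * μ / m) ^ m := by
      have hfact : (m:ℝ) ^ m / m.factorial ≤ Real.exp 1 ^ m := by
        rw [Real.exp_one_pow]
        exact Real.pow_div_factorial_le_exp (x := (m:ℝ)) (by positivity) m
      calc μ ^ m / m.factorial = (μ / m) ^ m * ((m:ℝ) ^ m / m.factorial) := by
            rw [div_pow]; field_simp
        _ ≤ (μ / m) ^ m * Real.exp 1 ^ m := by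
            apply mul_le_mul_of_nonneg_left hfact (by positivity)
        _ = (Real.exp 1 * μ / m) ^ m := by rw [← mul_pow]; ring_nf
    -- step 3: (e μ / m)^m ≤ (e/k)^m
    have h3 : (Real.exp 1 * μ / m) ^ m ≤ (Real.exp 1 / k) ^ m := by
      apply pow_le_pow_left₀ (by positivity)
      rw [div_le_div_iff₀ hmpos hk0]
      calc Real.exp 1 * μ * k = Real.exp 1 * (k * μ) := by ring
        _ ≤ Real.exp 1 * m := by nlinarith [Real.exp_pos 1]
        _ = Real.exp 1 * m := rfl
    -- step 4: (e/k)^m ≤ (e/k)^(k μ) = exp((1 - log k) k μ)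
    have hek1 : Real.exp 1 / k ≤ 1 := by
      rw [div_le_one hk0]; exact hk
    have hek0 : 0 < Real.exp 1 / k := by positivity
    have h4 : (Real.exp 1 / k) ^ m ≤ Real.exp (-(k * (Real.log k - 2) * μ)) := by
      have : (Real.exp 1 / k) ^ m = (Real.exp 1 / k) ^ (m:ℝ) := by
        rw [Real.rpow_natCast]
      rw [this]
      calc (Real.exp 1 / k) ^ (m:ℝ) ≤ (Real.exp 1 / k) ^ (k * μ) :=
            Real.rpow_le_rpow_of_exponent_ge hek0 hek1 hkμm
        _ = Real.exp (Real.log (Real.exp 1 / k) * (k * μ)) := by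
            rw [Real.rpow_def_of_pos hek0]
        _ ≤ Real.exp (-(k * (Real.log k - 2) * μ)) := by
            apply Real.exp_le_exp.mpr
            rw [Real.log_div (Real.exp_ne_zero 1) hk0.ne', Real.log_exp]
            nlinarith [hkμ]
    calc (N.choose m : ℝ) * q ^ m ≤ μ ^ m / m.factorial := h1
      _ ≤ (Real.exp 1 * μ / m) ^ m := h2
      _ ≤ (Real.exp 1 / k) ^ m := h3
      _ ≤ _ := h4

/-- Let `π₁,…,π_d` be independent uniformly random permutations of
`{1,…,n}` (modelled by the uniform distribution on `Fin d → Equiv.Perm (Fin n)`)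
and `A, B ⊆ {1,…,n}`. With `e(A,B) = ∑_{i=1}^d |{x ∈ A : π_i x ∈ B}|` and
`μ = |A||B|d/n`, for any real `k ≥ e` we have
`P[e(A,B) ≥ kμ] ≤ exp(−k(log k − 2)μ)`. -/
theorem edge_large_deviation (n d : ℕ) (hn : 1 ≤ n) (hd : 1 ≤ d)
    (A B : Finset (Fin n)) (k : ℝ) (hk : Real.exp 1 ≤ k) :
    ((univ.filter fun π : Fin d → Equiv.Perm (Fin n) =>
        k * (A.card * B.card * d / n) ≤
          (∑ i : Fin d, (A.filter fun x => π i x ∈ B).card : ℝ)).card : ℝ)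
        / ((Nat.factorial n : ℝ) ^ d)
      ≤ Real.exp (-(k * (Real.log k - 2) * (A.card * B.card * d / n))) := by
  classical
  set μ : ℝ := (A.card * B.card * d / n : ℝ) with hμdef
  have hn0 : (0:ℝ) < n := by exact_mod_cast hn
  have hμ0 : 0 ≤ μ := by positivity
  set m : ℕ := ⌈k * μ⌉₊ with hmdef
  set Event := univ.filter fun π : Fin d → Equiv.Perm (Fin n) =>
      k * μ ≤ (∑ i : Fin d, (A.filter fun x => π i x ∈ B).card : ℝ) with hEvent
  set P := ((univ : Finset (Fin d)) ×ˢ A).powersetCard m with hP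
  set E : Finset ((Fin d) × (Fin n)) → Finset (Fin d → Equiv.Perm (Fin n)) :=
    fun S => univ.filter fun π => ∀ p ∈ S, π p.1 p.2 ∈ B with hE
  -- Step 1: Event ⊆ biUnion
  have hsub : Event ⊆ P.biUnion E := by
    intro π hπ
    rw [hEvent, mem_filter] at hπ
    set W := ((univ : Finset (Fin d)) ×ˢ A).filter fun p => π p.1 p.2 ∈ B with hW
    have hWcard : W.card = ∑ i : Fin d, (A.filter fun x => π i x ∈ B).card := by
      rw [card_eq_sum_card_fiberwise (f := Prod.fst) (t := univ) (fun p _ => mem_univ p.1)]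
      refine Finset.sum_congr rfl fun i _ => ?_
      have : (W.filter fun p => p.1 = i) = {i} ×ˢ (A.filter fun x => π i x ∈ B) := by
        ext ⟨a, x⟩
        simp only [hW, mem_filter, mem_product, mem_singleton, mem_univ, true_and]
        constructor
        · rintro ⟨⟨hxA, hB⟩, rfl⟩; exact ⟨rfl, hxA, hB⟩
        · rintro ⟨rfl, hxA, hB⟩; exact ⟨⟨hxA, hB⟩, rfl⟩
      rw [this, card_product, card_singleton, one_mul]
    have hmW : m ≤ W.card := by
      rw [hmdef]
      apply Nat.ceil_le.mpr
      rw [hWcard]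
      exact_mod_cast hπ.2
    obtain ⟨S, hSW, hScard⟩ := Finset.exists_subset_card_eq hmW
    apply mem_biUnion.mpr
    refine ⟨S, ?_, ?_⟩
    · exact mem_powersetCard.mpr ⟨hSW.trans (filter_subset _ _), hScard⟩
    · rw [hE, mem_filter]
      exact ⟨mem_univ _, fun p hp => (mem_filter.mp (hSW hp)).2⟩
  -- Step 2: per-S bound
  have hperS : ∀ S ∈ P, ((E S).card : ℝ)
      ≤ ((B.card : ℝ)/n) ^ m * ((Nat.factorial n : ℝ)) ^ d := by
    intro S hS
    obtain ⟨hSsub, hScard⟩ := mem_powersetCard.mp hS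
    set T : Fin d → Finset (Fin n) := fun i => (S.filter fun p => p.1 = i).image Prod.snd with hT
    have hTcard : ∀ i, (T i).card = (S.filter fun p => p.1 = i).card := by
      intro i
      apply card_image_of_injOn
      intro p hp q hq hpq
      rw [mem_coe, mem_filter] at hp hq
      exact Prod.ext (hp.2.trans hq.2.symm) hpq
    have hsumT : ∑ i, (T i).card = m := by
      rw [← hScard]
      rw [funext hTcard]  -- might not typecheck; fallback below
      exact (card_eq_sum_card_fiberwise (f := Prod.fst) (t := univ) (fun p _ => mem_univ p.1)).symm
    have hEcard : (E S).card = ∏ i, (univ.filter fun σ : Equiv.Perm (Fin n) =>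
        ∀ x ∈ T i, σ x ∈ B).card := by
      simp only [hE]
      have : (univ.filter fun π : Fin d → Equiv.Perm (Fin n) => ∀ p ∈ S, π p.1 p.2 ∈ B)
          = univ.filter fun π => ∀ i, ∀ x ∈ T i, π i x ∈ B := by
        apply filter_congr
        intro π _
        constructor
        · intro h i x hx
          rw [hT, mem_image] at hx
          obtain ⟨p, hp, rfl⟩ := hx
          rw [mem_filter] at hp
          have := h p hp.1
          rwa [hp.2] at this
        · intro h p hp
          refine h p.1 p.2 ?_
          rw [hT, mem_image]
          exact ⟨p, mem_filter.mpr ⟨hp, rfl⟩, rfl⟩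
      rw [this]
      have := filter_pi_card (fun i (σ : Equiv.Perm (Fin n)) => ∀ x ∈ T i, σ x ∈ B)
      convert this using 2
      congr!
    rw [hEcard]
    push_cast
    calc (∏ i, ((univ.filter fun σ : Equiv.Perm (Fin n) => ∀ x ∈ T i, σ x ∈ B).card : ℝ))
        ≤ ∏ i, (((B.card : ℝ)/n) ^ (T i).card * (Nat.factorial n : ℝ)) := by
          apply Finset.prod_le_prod (fun i _ => by positivity)
          exact fun i _ => perm_count_real n hn (T i) B
      _ = ((B.card : ℝ)/n) ^ (∑ i, (T i).card) * ((Nat.factorial n : ℝ)) ^ d := by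
          rw [prod_mul_distrib, prod_pow_eq_pow_sum, prod_const, card_univ, Fintype.card_fin]
      _ = ((B.card : ℝ)/n) ^ m * ((Nat.factorial n : ℝ)) ^ d := by rw [hsumT]
  -- Step 3: combine
  have hfac : (0:ℝ) < (Nat.factorial n : ℝ) ^ d := by positivity
  rw [div_le_iff₀ hfac]
  have hPcard : (P.card : ℕ) = (d * A.card).choose m := by
    rw [hP, card_powersetCard, card_product, card_univ, Fintype.card_fin]
  calc (Event.card : ℝ) ≤ ((P.biUnion E).card : ℝ) := by
        exact_mod_cast card_le_card hsub
    _ ≤ ((∑ S ∈ P, (E S).card : ℕ) : ℝ) := by exact_mod_cast card_biUnion_le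
    _ = ∑ S ∈ P, ((E S).card : ℝ) := by push_cast; rfl
    _ ≤ ∑ S ∈ P, ((B.card : ℝ)/n) ^ m * ((Nat.factorial n : ℝ)) ^ d := sum_le_sum hperS
    _ = (P.card : ℝ) * (((B.card : ℝ)/n) ^ m * ((Nat.factorial n : ℝ)) ^ d) := by
        rw [sum_const, nsmul_eq_mul]
    _ ≤ Real.exp (-(k * (Real.log k - 2) * μ)) * ((Nat.factorial n : ℝ)) ^ d := by
        rw [← mul_assoc]
        apply mul_le_mul_of_nonneg_right _ hfac.le
        have := tail_bound μ hμ0 k hk (d * A.card) ((B.card : ℝ)/n) (by positivity)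
          (by rw [hμdef]; push_cast; ring_nf; rfl)
        rw [hPcard]
        exact_mod_cast this
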